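/- Let F:[0,1]^n → ℝ≥0 be differentiable and γ-weakly DR-submodular for some γ ∈ (0,1], i.e., for all x ≤ y componentwise, ∇F(x) ≥ γ·∇F(y) componentwise. Then for all x, y ∈ [0,1]^n with x ≤ y and all λ ∈ [0,1], F(λx + (1-λ)y) ≥ (λ·F(x) + γ²(1-λ)·F(y)) / (λ + γ²(1-λ)). -/

import Mathlib

open Set

lemma clm_sum {n : ℕ} (L : (Fin n → ℝ) →L[ℝ] ℝ) (v : Fin n → ℝ) :
    L v = ∑ i, v i * L (Pi.single i 1) := by
  have hv : v = ∑ i, v i • (Pi.single i 1 : Fin n → ℝ) := by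
    ext j
    simp [Finset.sum_apply, Pi.single_apply]
  conv_lhs => rw [hv]
  simp [map_sum]

lemma key_lower (g g' : ℝ → ℝ) (hg : ∀ t, HasDerivAt g (g' t) t) (c : ℝ)
    (h : ∀ t ∈ Icc (0:ℝ) 1, c ≤ g' t) : g 0 + c ≤ g 1 := by
  have hd : ∀ t : ℝ, HasDerivAt (fun s => g s - c * s) (g' t - c) t := by
    intro t
    have : HasDerivAt (fun s : ℝ => c * s) c t := by
      simpa using (hasDerivAt_id t).const_mul c
    exact (hg t).sub this
  have mono : MonotoneOn (fun s => g s - c * s) (Icc (0:ℝ) 1) := by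
    apply monotoneOn_of_deriv_nonneg (convex_Icc 0 1)
    · exact fun t _ => ((hd t).differentiableAt.continuousAt).continuousWithinAt
    · intro t _
      exact (hd t).differentiableAt.differentiableWithinAt
    · intro t ht
      rw [interior_Icc] at ht
      have := h t (Ioo_subset_Icc_self ht)
      rw [(hd t).deriv]
      linarith
  have := mono (left_mem_Icc.2 zero_le_one) (right_mem_Icc.2 zero_le_one) zero_le_one
  simp only [mul_zero, mul_one, sub_zero] at this
  linarith

lemma key_upper (g g' : ℝ → ℝ) (hg : ∀ t, HasDerivAt g (g' t) t) (c : ℝ)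
    (h : ∀ t ∈ Icc (0:ℝ) 1, g' t ≤ c) : g 1 ≤ g 0 + c := by
  have := key_lower (fun t => -(g t)) (fun t => -(g' t)) (fun t => (hg t).neg) (-c)
    (fun t ht => neg_le_neg (h t ht))
  linarith

/-- For a differentiable, nonnegative, γ-weakly DR-submodular
`F : [0,1]^n → ℝ≥0`, for all `x ≤ y` in the box and `λ ∈ [0,1]`,
`F(λx + (1-λ)y) ≥ (λ F(x) + γ²(1-λ) F(y)) / (λ + γ²(1-λ))`. -/
theorem stmt0 (n : ℕ) (γ : ℝ) (hγ0 : 0 < γ) (hγ1 : γ ≤ 1)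
    (F : (Fin n → ℝ) → ℝ)
    (hF : Differentiable ℝ F)
    (hnonneg : ∀ x ∈ Icc (0 : Fin n → ℝ) 1, 0 ≤ F x)
    (hDR : ∀ x ∈ Icc (0 : Fin n → ℝ) 1, ∀ y ∈ Icc (0 : Fin n → ℝ) 1,
      x ≤ y → ∀ i, γ * fderiv ℝ F y (Pi.single i 1) ≤ fderiv ℝ F x (Pi.single i 1))
    (x y : Fin n → ℝ) (hx : x ∈ Icc (0 : Fin n → ℝ) 1) (hy : y ∈ Icc (0 : Fin n → ℝ) 1)
    (hxy : x ≤ y) (l : ℝ) (hl : l ∈ Icc (0 : ℝ) 1) :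
    (l * F x + γ ^ 2 * (1 - l) * F y) / (l + γ ^ 2 * (1 - l))
      ≤ F (l • x + (1 - l) • y) := by
  obtain ⟨hl0, hl1⟩ := hl
  set z := l • x + (1 - l) • y with hz
  have hxz : x ≤ z := by
    intro i
    have := hxy i
    simp only [hz, Pi.add_apply, Pi.smul_apply, smul_eq_mul]
    nlinarith
  have hzy : z ≤ y := by
    intro i
    have := hxy i
    simp only [hz, Pi.add_apply, Pi.smul_apply, smul_eq_mul]
    nlinarith
  have hzmem : z ∈ Icc (0 : Fin n → ℝ) 1 := ⟨le_trans hx.1 hxz, le_trans hzy hy.2⟩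
  have seg : ∀ (a b : Fin n → ℝ), a ≤ b → ∀ t ∈ Icc (0:ℝ) 1,
      a ≤ a + t • (b - a) ∧ a + t • (b - a) ≤ b := by
    intro a b hab t ht
    constructor <;> intro i <;>
      simp only [Pi.add_apply, Pi.smul_apply, Pi.sub_apply, smul_eq_mul] <;>
      nlinarith [hab i, ht.1, ht.2]
  have hasD : ∀ (a v : Fin n → ℝ) (t : ℝ),
      HasDerivAt (fun s : ℝ => F (a + s • v)) (fderiv ℝ F (a + t • v) v) t := by
    intro a v t
    have h1 : HasDerivAt (fun s : ℝ => a + s • v) v t := by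
      simpa using ((hasDerivAt_id t).smul_const v).const_add a
    exact (hF (a + t • v)).hasFDerivAt.comp_hasDerivAt t h1
  set E := fderiv ℝ F z (y - x) with hE
  have e1 : z - x = (1 - l) • (y - x) := by
    ext i
    simp only [hz, Pi.sub_apply, Pi.add_apply, Pi.smul_apply, smul_eq_mul]
    ring
  have e2 : y - z = l • (y - x) := by
    ext i
    simp only [hz, Pi.sub_apply, Pi.add_apply, Pi.smul_apply, smul_eq_mul]
    ring
  -- lower bound on F z - F x
  have h1 : F x + γ * ((1 - l) * E) ≤ F z := by
    have hkey := key_lower (fun s => F (x + s • (z - x)))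
      (fun t => fderiv ℝ F (x + t • (z - x)) (z - x))
      (hasD x (z - x)) (γ * fderiv ℝ F z (z - x)) ?_
    · have hfz : fderiv ℝ F z (z - x) = (1 - l) * E := by
        rw [e1, map_smul, smul_eq_mul]
      rw [← hfz]
      simpa using hkey
    · intro t ht
      obtain ⟨hxp, hpz⟩ := seg x z hxz t ht
      set p := x + t • (z - x) with hp
      have hpmem : p ∈ Icc (0 : Fin n → ℝ) 1 := ⟨hx.1.trans hxp, hpz.trans hzmem.2⟩
      show γ * fderiv ℝ F z (z - x) ≤ fderiv ℝ F p (z - x)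
      rw [clm_sum (fderiv ℝ F p), clm_sum (fderiv ℝ F z), Finset.mul_sum]
      apply Finset.sum_le_sum
      intro i _
      have hDRi := hDR p hpmem z hzmem hpz i
      have hv : 0 ≤ (z - x) i := sub_nonneg.2 (hxz i)
      calc γ * ((z - x) i * fderiv ℝ F z (Pi.single i 1))
          = (z - x) i * (γ * fderiv ℝ F z (Pi.single i 1)) := by ring
        _ ≤ (z - x) i * fderiv ℝ F p (Pi.single i 1) :=
            mul_le_mul_of_nonneg_left hDRi hv
  -- upper bound on F y - F z
  have h2 : F y ≤ F z + γ⁻¹ * (l * E) := by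
    have hkey := key_upper (fun s => F (z + s • (y - z)))
      (fun t => fderiv ℝ F (z + t • (y - z)) (y - z))
      (hasD z (y - z)) (γ⁻¹ * fderiv ℝ F z (y - z)) ?_
    · have hfz : fderiv ℝ F z (y - z) = l * E := by
        rw [e2, map_smul, smul_eq_mul]
      rw [← hfz]
      simpa using hkey
    · intro t ht
      obtain ⟨hzp, hpy⟩ := seg z y hzy t ht
      set p := z + t • (y - z) with hp
      have hpmem : p ∈ Icc (0 : Fin n → ℝ) 1 := ⟨hzmem.1.trans hzp, hpy.trans hy.2⟩
      show fderiv ℝ F p (y - z) ≤ γ⁻¹ * fderiv ℝ F z (y - z)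
      rw [clm_sum (fderiv ℝ F p), clm_sum (fderiv ℝ F z), Finset.mul_sum]
      apply Finset.sum_le_sum
      intro i _
      have hDRi := hDR z hzmem p hpmem hzp i
      have hv : 0 ≤ (y - z) i := sub_nonneg.2 (hzy i)
      have hγne : γ ≠ 0 := hγ0.ne'
      have hstep : fderiv ℝ F p (Pi.single i 1) ≤ γ⁻¹ * fderiv ℝ F z (Pi.single i 1) := by
        have h := mul_le_mul_of_nonneg_left hDRi (inv_nonneg.2 hγ0.le)
        rwa [← mul_assoc, inv_mul_cancel₀ hγne, one_mul] at h
      calc (y - z) i * fderiv ℝ F p (Pi.single i 1)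
          ≤ (y - z) i * (γ⁻¹ * fderiv ℝ F z (Pi.single i 1)) :=
            mul_le_mul_of_nonneg_left hstep hv
        _ = γ⁻¹ * ((y - z) i * fderiv ℝ F z (Pi.single i 1)) := by ring
  have h2' : γ * F y ≤ γ * F z + l * E := by
    have := mul_le_mul_of_nonneg_left h2 hγ0.le
    rw [mul_add, ← mul_assoc, mul_inv_cancel₀ hγ0.ne', one_mul] at this
    exact this
  have hγsq : 0 < γ ^ 2 := by positivity
  have hγsq1 : γ ^ 2 ≤ 1 := by nlinarith
  have hd : 0 < l + γ ^ 2 * (1 - l) := by nlinarith [mul_nonneg hl0 (sub_nonneg.2 hγsq1)]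
  rw [div_le_iff₀ hd]
  nlinarith [mul_le_mul_of_nonneg_left h1 hl0,
    mul_le_mul_of_nonneg_left h2' (mul_nonneg hγ0.le (sub_nonneg.2 hl1))]
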